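/- Fix θ₀ ∈ ℝ^d and a design π over 𝒮 such that M_{θ₀}(π) is positive definite. Suppose g̃_{θ₀}(π) ≤ (1+ε)(d+1) for some ε ≥ 0, and let ε_lift ≥ 0 satisfy Δ_{θ₀}(π) ⪯ ε_lift · M_{θ₀}(π) in the Loewner order. Then g_{θ₀}(π) ≤ (1+ε_lift)((1+ε)d + ε) ≤ 2(1+ε_lift)(1+ε)d. -/

import Mathlib

open Matrix

noncomputable section

/-- MNL choice probability without outside option. -/
def mnlP {N d : ℕ} (a : Fin N → Fin d → ℝ) (θ : Fin d → ℝ) (S : Finset (Fin N)) (i : Fin N) : ℝ :=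
  Real.exp (a i ⬝ᵥ θ) / ∑ j ∈ S, Real.exp (a j ⬝ᵥ θ)

/-- Mean feature vector under the MNL choice probabilities. -/
def abar {N d : ℕ} (a : Fin N → Fin d → ℝ) (θ : Fin d → ℝ) (S : Finset (Fin N)) : Fin d → ℝ :=
  ∑ j ∈ S, mnlP a θ S j • a j

/-- Fisher information matrix of an assortment under the MNL model. -/
def fisher {N d : ℕ} (a : Fin N → Fin d → ℝ) (θ : Fin d → ℝ) (S : Finset (Fin N)) :
    Matrix (Fin d) (Fin d) ℝ :=
  ∑ i ∈ S, mnlP a θ S i • vecMulVec (a i - abar a θ S) (a i - abar a θ S)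

/-- A design: a probability distribution over the collection `𝒮` of feasible assortments. -/
def IsDesign {N : ℕ} (𝒮 : Finset (Finset (Fin N))) (π : Finset (Fin N) → ℝ) : Prop :=
  (∀ S, 0 ≤ π S) ∧ (∀ S, S ∉ 𝒮 → π S = 0) ∧ (∑ S ∈ 𝒮, π S) = 1

/-- Expected Fisher information matrix of a design. -/
def designM {N d : ℕ} (a : Fin N → Fin d → ℝ) (θ : Fin d → ℝ) (𝒮 : Finset (Finset (Fin N)))
    (π : Finset (Fin N) → ℝ) : Matrix (Fin d) (Fin d) ℝ :=
  ∑ S ∈ 𝒮, π S • fisher a θ S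

/-- The G-optimality objective. -/
def gObj {N d : ℕ} (a : Fin N → Fin d → ℝ) (θ : Fin d → ℝ) (𝒮 : Finset (Finset (Fin N)))
    (π : Finset (Fin N) → ℝ) : ℝ :=
  sSup ((fun S => ((designM a θ 𝒮 π)⁻¹ * fisher a θ S).trace) '' (𝒮 : Set (Finset (Fin N))))

/-- Lifted feature vector `ã_i = (a_iᵀ, 1)ᵀ ∈ ℝ^{d+1}`. -/
def liftedFeat {N d : ℕ} (a : Fin N → Fin d → ℝ) (i : Fin N) : Fin (d + 1) → ℝ :=
  Fin.snoc (a i) 1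

/-- Lifted (uncentered) second-moment matrix. -/
def liftedI {N d : ℕ} (a : Fin N → Fin d → ℝ) (θ : Fin d → ℝ) (S : Finset (Fin N)) :
    Matrix (Fin (d + 1)) (Fin (d + 1)) ℝ :=
  ∑ i ∈ S, mnlP a θ S i • vecMulVec (liftedFeat a i) (liftedFeat a i)

/-- Lifted design matrix. -/
def liftedM {N d : ℕ} (a : Fin N → Fin d → ℝ) (θ : Fin d → ℝ) (𝒮 : Finset (Finset (Fin N)))
    (π : Finset (Fin N) → ℝ) : Matrix (Fin (d + 1)) (Fin (d + 1)) ℝ :=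
  ∑ S ∈ 𝒮, π S • liftedI a θ S

/-- Lifted G-optimality objective. -/
def gLift {N d : ℕ} (a : Fin N → Fin d → ℝ) (θ : Fin d → ℝ) (𝒮 : Finset (Finset (Fin N)))
    (π : Finset (Fin N) → ℝ) : ℝ :=
  sSup ((fun S => ((liftedM a θ 𝒮 π)⁻¹ * liftedI a θ S).trace) '' (𝒮 : Set (Finset (Fin N))))

/-- Uncentered second-moment matrix `Ā_θ(S)`. -/
def Abar {N d : ℕ} (a : Fin N → Fin d → ℝ) (θ : Fin d → ℝ) (S : Finset (Fin N)) :
    Matrix (Fin d) (Fin d) ℝ :=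
  ∑ i ∈ S, mnlP a θ S i • vecMulVec (a i) (a i)

/-- `B̄_θ(π) = E_{S∼π}[Ā_θ(S)]`. -/
def Bbar {N d : ℕ} (a : Fin N → Fin d → ℝ) (θ : Fin d → ℝ) (𝒮 : Finset (Finset (Fin N)))
    (π : Finset (Fin N) → ℝ) : Matrix (Fin d) (Fin d) ℝ :=
  ∑ S ∈ 𝒮, π S • Abar a θ S

/-- `b̄_θ(π) = E_{S∼π}[ā_θ(S)]`. -/
def bbar {N d : ℕ} (a : Fin N → Fin d → ℝ) (θ : Fin d → ℝ) (𝒮 : Finset (Finset (Fin N)))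
    (π : Finset (Fin N) → ℝ) : Fin d → ℝ :=
  ∑ S ∈ 𝒮, π S • abar a θ S

/-- Schur-complement surrogate `M̂_θ(π) = B̄_θ(π) − b̄_θ(π) b̄_θ(π)ᵀ`. -/
def Mhat {N d : ℕ} (a : Fin N → Fin d → ℝ) (θ : Fin d → ℝ) (𝒮 : Finset (Finset (Fin N)))
    (π : Finset (Fin N) → ℝ) : Matrix (Fin d) (Fin d) ℝ :=
  Bbar a θ 𝒮 π - vecMulVec (bbar a θ 𝒮 π) (bbar a θ 𝒮 π)

/-- Design-mismatch matrix `Δ_θ(π) = M̂_θ(π) − M_θ(π)`. -/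
def mismatch {N d : ℕ} (a : Fin N → Fin d → ℝ) (θ : Fin d → ℝ) (𝒮 : Finset (Finset (Fin N)))
    (π : Finset (Fin N) → ℝ) : Matrix (Fin d) (Fin d) ℝ :=
  Mhat a θ 𝒮 π - designM a θ 𝒮 π

section H1

variable {n : Type*} [Fintype n]

lemma sum_mulVec' {ι : Type*} (s : Finset ι) {m : Type*} [Fintype m]
    (A : ι → Matrix n m ℝ) (x : m → ℝ) :
    (∑ i ∈ s, A i) *ᵥ x = ∑ i ∈ s, A i *ᵥ x := by
  ext k
  simp only [mulVec, dotProduct, Finset.sum_apply, Matrix.sum_apply, Finset.sum_mul]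
  exact Finset.sum_comm

lemma sum_dot {ι : Type*} (s : Finset ι) (f : ι → n → ℝ) (x : n → ℝ) :
    (∑ i ∈ s, f i) ⬝ᵥ x = ∑ i ∈ s, f i ⬝ᵥ x := by
  simp only [dotProduct, Finset.sum_apply, Finset.sum_mul]
  exact Finset.sum_comm

lemma vecMulVec_mulVec' (u v x : n → ℝ) : vecMulVec u v *ᵥ x = (v ⬝ᵥ x) • u := by
  ext k
  simp only [mulVec, dotProduct, vecMulVec_apply, Pi.smul_apply, smul_eq_mul, Finset.sum_mul]
  exact Finset.sum_congr rfl fun j _ => by ring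

lemma trace_mul_vecMulVec (A : Matrix n n ℝ) (u v : n → ℝ) :
    (A * vecMulVec u v).trace = v ⬝ᵥ (A *ᵥ u) := by
  simp only [Matrix.trace, Matrix.diag, Matrix.mul_apply, vecMulVec_apply, dotProduct, mulVec,
    Finset.mul_sum]
  exact Finset.sum_congr rfl fun k _ => Finset.sum_congr rfl fun j _ => by ring

lemma trace_mul_sum_smul_vecMulVec {ι : Type*} (A : Matrix n n ℝ) (s : Finset ι) (c : ι → ℝ)
    (w : ι → n → ℝ) :
    (A * ∑ i ∈ s, c i • vecMulVec (w i) (w i)).trace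
      = ∑ i ∈ s, c i * (w i ⬝ᵥ (A *ᵥ w i)) := by
  rw [Finset.mul_sum, trace_sum]
  refine Finset.sum_congr rfl fun i _ => ?_
  rw [Matrix.mul_smul, trace_smul, trace_mul_vecMulVec]
  simp

lemma quad_sum_smul {ι : Type*} (s : Finset ι) (c : ι → ℝ) (A : ι → Matrix n n ℝ) (x : n → ℝ) :
    x ⬝ᵥ ((∑ i ∈ s, c i • A i) *ᵥ x) = ∑ i ∈ s, c i * (x ⬝ᵥ (A i *ᵥ x)) := by
  rw [sum_mulVec']
  rw [show ∀ f : ι → n → ℝ, x ⬝ᵥ (∑ i ∈ s, f i) = ∑ i ∈ s, x ⬝ᵥ f i from fun f => by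
    rw [dotProduct_comm, sum_dot]; exact Finset.sum_congr rfl fun i _ => dotProduct_comm _ _]
  refine Finset.sum_congr rfl fun i _ => ?_
  rw [smul_mulVec, dotProduct_smul]
  simp

lemma quad_sum_smul_vecMulVec {ι : Type*} (s : Finset ι) (c : ι → ℝ) (w : ι → n → ℝ) (x : n → ℝ) :
    x ⬝ᵥ ((∑ i ∈ s, c i • vecMulVec (w i) (w i)) *ᵥ x) = ∑ i ∈ s, c i * (w i ⬝ᵥ x) ^ 2 := by
  rw [quad_sum_smul]
  refine Finset.sum_congr rfl fun i _ => ?_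
  rw [vecMulVec_mulVec', dotProduct_smul]
  rw [dotProduct_comm]
  simp [sq]

lemma isHermitian_sum_smul_vecMulVec {ι : Type*} (s : Finset ι) (c : ι → ℝ) (w : ι → n → ℝ) :
    (∑ i ∈ s, c i • vecMulVec (w i) (w i)).IsHermitian := by
  show _ᴴ = _
  ext i j
  simp only [conjTranspose_apply, Matrix.sum_apply, Matrix.smul_apply, vecMulVec_apply,
    smul_eq_mul, star_trivial]
  exact Finset.sum_congr rfl fun k _ => by ring

lemma dot_mulVec_symm {A : Matrix n n ℝ} (hA : A.IsHermitian) (u v : n → ℝ) :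
    u ⬝ᵥ (A *ᵥ v) = v ⬝ᵥ (A *ᵥ u) := by
  have hAt : Aᵀ = A := by
    have := hA.eq
    rwa [conjTranspose_eq_transpose_of_trivial] at this
  rw [Matrix.dotProduct_mulVec]
  nth_rewrite 1 [← hAt]
  rw [Matrix.vecMul_transpose, dotProduct_comm]

end H1

set_option linter.unusedSectionVars false

section helpers2
variable {n : Type*} [Fintype n] [DecidableEq n]

lemma myPosDef_smul {A : Matrix n n ℝ} (hA : A.PosDef) {c : ℝ} (hc : 0 < c) :
    (c • A).PosDef := by
  refine PosDef.of_dotProduct_mulVec_pos ?_ fun x hx => ?_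
  · show _ᴴ = _
    rw [conjTranspose_smul, hA.isHermitian.eq]
    simp
  rw [smul_mulVec, dotProduct_smul]
  exact mul_pos hc (by simpa using hA.dotProduct_mulVec_pos hx)

lemma mySmul_inv {A : Matrix n n ℝ} (hA : IsUnit A.det) {c : ℝ} (hc : c ≠ 0) :
    (c • A)⁻¹ = c⁻¹ • A⁻¹ := by
  apply Matrix.inv_eq_right_inv
  rw [Matrix.smul_mul, Matrix.mul_smul, Matrix.mul_nonsing_inv _ hA, smul_smul,
    mul_inv_cancel₀ hc, one_smul]

lemma dot_mulVec_symm' {A : Matrix n n ℝ} (hA : A.IsHermitian) (u v : n → ℝ) :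
    u ⬝ᵥ (A *ᵥ v) = v ⬝ᵥ (A *ᵥ u) := by
  have hAt : Aᵀ = A := by
    have := hA.eq
    rwa [conjTranspose_eq_transpose_of_trivial] at this
  rw [Matrix.dotProduct_mulVec]
  nth_rewrite 1 [← hAt]
  rw [Matrix.vecMul_transpose, dotProduct_comm]

lemma quad_inv_mono {A B : Matrix n n ℝ} (hA : A.PosDef) (hB : B.PosDef)
    (hAB : (A - B).PosSemidef) (u : n → ℝ) :
    u ⬝ᵥ (A⁻¹ *ᵥ u) ≤ u ⬝ᵥ (B⁻¹ *ᵥ u) := by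
  set y := A⁻¹ *ᵥ u with hy
  set z := B⁻¹ *ᵥ u with hz
  have hAy : A *ᵥ y = u := by
    rw [hy, mulVec_mulVec, Matrix.mul_nonsing_inv _ hA.det_pos.ne'.isUnit, one_mulVec]
  have hBz : B *ᵥ z = u := by
    rw [hz, mulVec_mulVec, Matrix.mul_nonsing_inv _ hB.det_pos.ne'.isUnit, one_mulVec]
  -- u ⬝ y = 2 (y⬝u) - y⬝(A y)
  have h1 : u ⬝ᵥ y = 2 * (y ⬝ᵥ u) - y ⬝ᵥ (A *ᵥ y) := by
    rw [hAy, dotProduct_comm]; ring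
  have h2 : y ⬝ᵥ (B *ᵥ y) ≤ y ⬝ᵥ (A *ᵥ y) := by
    have := hAB.dotProduct_mulVec_nonneg y
    simp only [star_trivial, sub_mulVec, dotProduct_sub] at this
    linarith
  -- expansion of (y-z)ᵀ B (y-z) ≥ 0
  have h3 : 0 ≤ y ⬝ᵥ (B *ᵥ y) - 2 * (y ⬝ᵥ u) + u ⬝ᵥ z := by
    have h0 := hB.posSemidef.dotProduct_mulVec_nonneg (y - z)
    simp only [star_trivial, mulVec_sub, dotProduct_sub, sub_dotProduct] at h0
    have hzy : z ⬝ᵥ (B *ᵥ y) = y ⬝ᵥ (B *ᵥ z) := dot_mulVec_symm' hB.isHermitian z y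
    have hzu : z ⬝ᵥ (B *ᵥ z) = u ⬝ᵥ z := by rw [hBz, dotProduct_comm]
    have hyu : y ⬝ᵥ (B *ᵥ z) = y ⬝ᵥ u := by rw [hBz]
    rw [hzy, hzu, hyu] at h0
    linarith
  calc u ⬝ᵥ y = 2 * (y ⬝ᵥ u) - y ⬝ᵥ (A *ᵥ y) := h1
    _ ≤ 2 * (y ⬝ᵥ u) - y ⬝ᵥ (B *ᵥ y) := by linarith
    _ ≤ u ⬝ᵥ z := by linarith

end helpers2

section snocs
variable {d : ℕ}

lemma snoc_dot_snoc (u v : Fin d → ℝ) (α β : ℝ) :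
    (Fin.snoc u α : Fin (d+1) → ℝ) ⬝ᵥ (Fin.snoc v β) = u ⬝ᵥ v + α * β := by
  simp [dotProduct, Fin.sum_univ_castSucc]

lemma smul_snoc (r : ℝ) (u : Fin d → ℝ) (α : ℝ) :
    r • (Fin.snoc u α : Fin (d+1) → ℝ) = Fin.snoc (r • u) (r * α) := by
  funext j
  refine Fin.lastCases ?_ ?_ j <;> simp

lemma sum_snoc {ι : Type*} (s : Finset ι) (f : ι → Fin d → ℝ) (g : ι → ℝ) :
    ∑ i ∈ s, (Fin.snoc (f i) (g i) : Fin (d+1) → ℝ)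
      = Fin.snoc (∑ i ∈ s, f i) (∑ i ∈ s, g i) := by
  funext j
  refine Fin.lastCases ?_ ?_ j
  · simp [Finset.sum_apply]
  · intro k; simp [Finset.sum_apply]

lemma snoc_zero_zero : (Fin.snoc (0 : Fin d → ℝ) (0:ℝ)) = (0 : Fin (d+1) → ℝ) := by
  funext j
  refine Fin.lastCases ?_ ?_ j <;> simp

end snocs

lemma weighted_var {ι : Type*} (s : Finset ι) (p : ι → ℝ) (hp : ∑ i ∈ s, p i = 1) (t : ι → ℝ) :
    ∑ i ∈ s, p i * (t i - ∑ j ∈ s, p j * t j) ^ 2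
      = ∑ i ∈ s, p i * t i ^ 2 - (∑ j ∈ s, p j * t j) ^ 2 := by
  set m := ∑ j ∈ s, p j * t j with hm
  have h : ∀ i ∈ s, p i * (t i - m) ^ 2 = p i * t i ^ 2 - 2 * m * (p i * t i) + m ^ 2 * p i :=
    fun i _ => by ring
  rw [Finset.sum_congr rfl h]
  rw [Finset.sum_add_distrib, Finset.sum_sub_distrib, ← Finset.mul_sum, ← Finset.mul_sum, hp, ← hm]
  ring

section model
variable {N d : ℕ} (a : Fin N → Fin d → ℝ) (θ : Fin d → ℝ)

lemma sum_mnlP {S : Finset (Fin N)} (hS : S.Nonempty) : ∑ i ∈ S, mnlP a θ S i = 1 := by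
  have hpos : 0 < ∑ j ∈ S, Real.exp (a j ⬝ᵥ θ) :=
    Finset.sum_pos (fun j _ => Real.exp_pos _) hS
  simp only [mnlP, ← Finset.sum_div]
  exact div_self hpos.ne'

lemma mnlP_pos {S : Finset (Fin N)} (hS : S.Nonempty) (i : Fin N) : 0 < mnlP a θ S i :=
  div_pos (Real.exp_pos _) (Finset.sum_pos (fun j _ => Real.exp_pos _) hS)

lemma abar_dot (S : Finset (Fin N)) (x : Fin d → ℝ) :
    abar a θ S ⬝ᵥ x = ∑ i ∈ S, mnlP a θ S i * (a i ⬝ᵥ x) := by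
  rw [abar, sum_dot]
  exact Finset.sum_congr rfl fun i _ => by rw [smul_dotProduct]; simp

lemma bbar_dot (𝒮 : Finset (Finset (Fin N))) (π : Finset (Fin N) → ℝ) (x : Fin d → ℝ) :
    bbar a θ 𝒮 π ⬝ᵥ x = ∑ S ∈ 𝒮, π S * (abar a θ S ⬝ᵥ x) := by
  rw [bbar, sum_dot]
  exact Finset.sum_congr rfl fun S _ => by rw [smul_dotProduct]; simp

lemma quad_fisher (S : Finset (Fin N)) (hS : S.Nonempty) (x : Fin d → ℝ) :
    x ⬝ᵥ (fisher a θ S *ᵥ x)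
      = ∑ i ∈ S, mnlP a θ S i * (a i ⬝ᵥ x) ^ 2 - (abar a θ S ⬝ᵥ x) ^ 2 := by
  rw [fisher, quad_sum_smul_vecMulVec]
  have h1 : ∀ i ∈ S, mnlP a θ S i * ((a i - abar a θ S) ⬝ᵥ x) ^ 2
      = mnlP a θ S i * (a i ⬝ᵥ x - ∑ j ∈ S, mnlP a θ S j * (a j ⬝ᵥ x)) ^ 2 := by
    intro i _
    rw [sub_dotProduct, abar_dot]
  rw [Finset.sum_congr rfl h1, weighted_var S _ (sum_mnlP a θ hS), abar_dot]

lemma quad_Abar (S : Finset (Fin N)) (x : Fin d → ℝ) :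
    x ⬝ᵥ (Abar a θ S *ᵥ x) = ∑ i ∈ S, mnlP a θ S i * (a i ⬝ᵥ x) ^ 2 := by
  rw [Abar, quad_sum_smul_vecMulVec]

lemma quad_mismatch (𝒮 : Finset (Finset (Fin N))) (π : Finset (Fin N) → ℝ)
    (h𝒮 : ∀ S ∈ 𝒮, S.Nonempty) (x : Fin d → ℝ) :
    x ⬝ᵥ (mismatch a θ 𝒮 π *ᵥ x)
      = ∑ S ∈ 𝒮, π S * (abar a θ S ⬝ᵥ x) ^ 2 - (bbar a θ 𝒮 π ⬝ᵥ x) ^ 2 := by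
  rw [mismatch, sub_mulVec, dotProduct_sub, Mhat, sub_mulVec, dotProduct_sub,
    Bbar, quad_sum_smul, designM, quad_sum_smul, vecMulVec_mulVec', dotProduct_smul]
  have h1 : ∀ S ∈ 𝒮, π S * (x ⬝ᵥ (Abar a θ S *ᵥ x))
      = π S * (∑ i ∈ S, mnlP a θ S i * (a i ⬝ᵥ x) ^ 2) := fun S _ => by rw [quad_Abar]
  have h2 : ∀ S ∈ 𝒮, π S * (x ⬝ᵥ (fisher a θ S *ᵥ x))
      = π S * (∑ i ∈ S, mnlP a θ S i * (a i ⬝ᵥ x) ^ 2) - π S * (abar a θ S ⬝ᵥ x) ^ 2 := by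
    intro S hS
    rw [quad_fisher a θ S (h𝒮 S hS)]
    ring
  rw [Finset.sum_congr rfl h1, Finset.sum_congr rfl h2, Finset.sum_sub_distrib]
  have h3 : bbar a θ 𝒮 π ⬝ᵥ x * (x ⬝ᵥ bbar a θ 𝒮 π) = (bbar a θ 𝒮 π ⬝ᵥ x) ^ 2 := by
    rw [dotProduct_comm x]; ring
  rw [smul_eq_mul, h3]
  ring

lemma isHermitian_vecMulVec_self {n : Type*} [Fintype n] (w : n → ℝ) :
    (vecMulVec w w).IsHermitian := by
  show _ᴴ = _
  ext i j
  simp [conjTranspose_apply, vecMulVec_apply, mul_comm]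

lemma isHermitian_sum' {n : Type*} [Fintype n] {ι : Type*} (s : Finset ι)
    (A : ι → Matrix n n ℝ) (h : ∀ i ∈ s, (A i).IsHermitian) : (∑ i ∈ s, A i).IsHermitian := by
  show _ᴴ = _
  rw [conjTranspose_sum]
  exact Finset.sum_congr rfl h

lemma isHermitian_smul' {n : Type*} [Fintype n] {A : Matrix n n ℝ} (hA : A.IsHermitian)
    (c : ℝ) : (c • A).IsHermitian := by
  show _ᴴ = _
  rw [conjTranspose_smul, hA.eq]
  simp

lemma isHermitian_designM (𝒮 : Finset (Finset (Fin N))) (π : Finset (Fin N) → ℝ) :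
    (designM a θ 𝒮 π).IsHermitian :=
  isHermitian_sum' _ _ fun S _ =>
    isHermitian_smul' (isHermitian_sum_smul_vecMulVec _ _ _) _

lemma isHermitian_mismatch (𝒮 : Finset (Finset (Fin N))) (π : Finset (Fin N) → ℝ) :
    (mismatch a θ 𝒮 π).IsHermitian := by
  refine IsHermitian.sub (IsHermitian.sub ?_ (isHermitian_vecMulVec_self _))
    (isHermitian_designM a θ 𝒮 π)
  exact isHermitian_sum' _ _ fun S _ =>
    isHermitian_smul' (isHermitian_sum_smul_vecMulVec _ _ _) _

lemma mismatch_posSemidef (𝒮 : Finset (Finset (Fin N))) (π : Finset (Fin N) → ℝ)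
    (hπ : IsDesign 𝒮 π) (h𝒮 : ∀ S ∈ 𝒮, S.Nonempty) :
    (mismatch a θ 𝒮 π).PosSemidef := by
  refine PosSemidef.of_dotProduct_mulVec_nonneg (isHermitian_mismatch a θ 𝒮 π) fun x => ?_
  simp only [star_trivial]
  rw [quad_mismatch a θ 𝒮 π h𝒮 x, bbar_dot, sub_nonneg]
  have := Finset.sum_sq_le_sum_mul_sum_of_sq_eq_mul 𝒮
    (f := π) (g := fun S => π S * (abar a θ S ⬝ᵥ x) ^ 2)
    (r := fun S => π S * (abar a θ S ⬝ᵥ x))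
    (fun S _ => hπ.1 S) (fun S _ => mul_nonneg (hπ.1 S) (sq_nonneg _))
    (fun S _ => by ring)
  rwa [hπ.2.2, one_mul] at this

end model
/-- Lifted Frank–Wolfe guarantee: if the lifted G-objective of `π` is at most
`(1+ε)(d+1)` and the design mismatch satisfies `Δ_{θ₀}(π) ⪯ ε_lift · M_{θ₀}(π)`, then
`g_{θ₀}(π) ≤ (1+ε_lift)((1+ε)d + ε) ≤ 2(1+ε_lift)(1+ε)d`. -/
theorem lifted_fw_guarantee {N d : ℕ} (hd : 1 ≤ d) (a : Fin N → Fin d → ℝ) (θ₀ : Fin d → ℝ)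
    (𝒮 : Finset (Finset (Fin N))) (h𝒮 : ∀ S ∈ 𝒮, 2 ≤ S.card)
    (π : Finset (Fin N) → ℝ) (hπ : IsDesign 𝒮 π)
    (hM : (designM a θ₀ 𝒮 π).PosDef)
    (ε εlift : ℝ) (hε : 0 ≤ ε) (hεlift : 0 ≤ εlift)
    (hg : gLift a θ₀ 𝒮 π ≤ (1 + ε) * (d + 1))
    (hmis : (εlift • designM a θ₀ 𝒮 π - mismatch a θ₀ 𝒮 π).PosSemidef) :
    gObj a θ₀ 𝒮 π ≤ (1 + εlift) * ((1 + ε) * d + ε) ∧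
      (1 + εlift) * ((1 + ε) * d + ε) ≤ 2 * (1 + εlift) * (1 + ε) * d := by
  obtain ⟨hπ0, hπout, hπ1⟩ := hπ
  have hSne : ∀ S ∈ 𝒮, S.Nonempty := fun S hS =>
    Finset.card_pos.mp (lt_of_lt_of_le (by norm_num) (h𝒮 S hS))
  have hd0 : (0:ℝ) ≤ (d:ℝ) := Nat.cast_nonneg d
  have hd1 : (1:ℝ) ≤ (d:ℝ) := by exact_mod_cast hd
  have hc : (0:ℝ) < 1 + εlift := by linarith
  -- mismatch is PSD, so Mhat is PosDef
  have hMis : (mismatch a θ₀ 𝒮 π).PosSemidef :=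
    mismatch_posSemidef a θ₀ 𝒮 π ⟨hπ0, hπout, hπ1⟩ hSne
  have hMh : (Mhat a θ₀ 𝒮 π).PosDef := by
    have heq : Mhat a θ₀ 𝒮 π = designM a θ₀ 𝒮 π + mismatch a θ₀ 𝒮 π := by
      rw [mismatch]; abel
    rw [heq]
    exact hM.add_posSemidef hMis
  -- the scaled matrix
  have hC : ((1 + εlift) • designM a θ₀ 𝒮 π).PosDef := myPosDef_smul hM hc
  have hCsub : ((1 + εlift) • designM a θ₀ 𝒮 π - Mhat a θ₀ 𝒮 π).PosSemidef := by
    have heq : (1 + εlift) • designM a θ₀ 𝒮 π - Mhat a θ₀ 𝒮 π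
        = εlift • designM a θ₀ 𝒮 π - mismatch a θ₀ 𝒮 π := by
      rw [mismatch, add_smul, one_smul]; abel
    rw [heq]; exact hmis
  -- liftedM is posdef
  have hquadMt : ∀ x : Fin (d+1) → ℝ, x ⬝ᵥ (liftedM a θ₀ 𝒮 π *ᵥ x)
      = ∑ S ∈ 𝒮, π S * ∑ i ∈ S, mnlP a θ₀ S i * (liftedFeat a i ⬝ᵥ x) ^ 2 := by
    intro x
    rw [liftedM, quad_sum_smul]
    exact Finset.sum_congr rfl fun S _ => by rw [liftedI, quad_sum_smul_vecMulVec]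
  have hMt : (liftedM a θ₀ 𝒮 π).PosDef := by
    refine PosDef.of_dotProduct_mulVec_pos (isHermitian_sum' _ _ fun S _ =>
      isHermitian_smul' (isHermitian_sum_smul_vecMulVec _ _ _) _) fun x hx => ?_
    simp only [star_trivial]
    rw [hquadMt x]
    rcases lt_or_eq_of_le (Finset.sum_nonneg fun S hS => mul_nonneg (hπ0 S)
      (Finset.sum_nonneg fun i _ => mul_nonneg (mnlP_pos a θ₀ (hSne S hS) i).le (sq_nonneg _)))
      with h | h
    · exact h
    exfalso
    -- all terms vanish
    have hzero : ∀ S ∈ 𝒮, ∀ i ∈ S, π S ≠ 0 → liftedFeat a i ⬝ᵥ x = 0 := by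
      intro S hS i hi hπS
      have hterm : ∀ T ∈ 𝒮, 0 ≤ π T * ∑ j ∈ T, mnlP a θ₀ T j * (liftedFeat a j ⬝ᵥ x) ^ 2 :=
        fun T hT => mul_nonneg (hπ0 T)
          (Finset.sum_nonneg fun j _ => mul_nonneg (mnlP_pos a θ₀ (hSne T hT) j).le (sq_nonneg _))
      have hS0 : π S * ∑ j ∈ S, mnlP a θ₀ S j * (liftedFeat a j ⬝ᵥ x) ^ 2 = 0 :=
        (Finset.sum_eq_zero_iff_of_nonneg hterm).mp h.symm S hS
      have hsum0 : ∑ j ∈ S, mnlP a θ₀ S j * (liftedFeat a j ⬝ᵥ x) ^ 2 = 0 := by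
        rcases mul_eq_zero.mp hS0 with h' | h'
        · exact absurd h' hπS
        · exact h'
      have := (Finset.sum_eq_zero_iff_of_nonneg
        (fun j _ => mul_nonneg (mnlP_pos a θ₀ (hSne S hS) j).le (sq_nonneg _))).mp hsum0 i hi
      rcases mul_eq_zero.mp this with h' | h'
      · exact absurd h' (mnlP_pos a θ₀ (hSne S hS) i).ne'
      · exact pow_eq_zero_iff (by norm_num) |>.mp h'
    -- decompose x
    set x0 : Fin d → ℝ := Fin.init x with hx0
    set c0 : ℝ := x (Fin.last d) with hc0
    have hxs : x = Fin.snoc x0 c0 := (Fin.snoc_init_self x).symm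
    have hdot : ∀ i : Fin N, liftedFeat a i ⬝ᵥ x = a i ⬝ᵥ x0 + c0 := by
      intro i
      rw [hxs, liftedFeat, snoc_dot_snoc, one_mul]
    -- x0 kills the design matrix
    have hMx0 : x0 ⬝ᵥ (designM a θ₀ 𝒮 π *ᵥ x0) = 0 := by
      rw [designM, quad_sum_smul]
      refine Finset.sum_eq_zero fun S hS => ?_
      rcases eq_or_ne (π S) 0 with h' | h'
      · rw [h', zero_mul]
      have hval : ∀ i ∈ S, a i ⬝ᵥ x0 = -c0 := by
        intro i hi
        have := hzero S hS i hi h'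
        rw [hdot i] at this
        linarith
      rw [quad_fisher a θ₀ S (hSne S hS) x0]
      have h1 : ∀ i ∈ S, mnlP a θ₀ S i * (a i ⬝ᵥ x0) ^ 2 = mnlP a θ₀ S i * (-c0) ^ 2 :=
        fun i hi => by rw [hval i hi]
      have h2 : abar a θ₀ S ⬝ᵥ x0 = -c0 := by
        rw [abar_dot]
        rw [Finset.sum_congr rfl fun i hi => by rw [hval i hi]]
        rw [← Finset.sum_mul, sum_mnlP a θ₀ (hSne S hS), one_mul]
      rw [Finset.sum_congr rfl h1, ← Finset.sum_mul, sum_mnlP a θ₀ (hSne S hS), h2]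
      ring
    have hx00 : x0 = 0 := by
      by_contra hne
      exact (hM.dotProduct_mulVec_pos hne).ne' (by simpa using hMx0)
    -- now c0 = 0
    obtain ⟨S₀, hS₀, hπS₀⟩ : ∃ S ∈ 𝒮, π S ≠ 0 := by
      by_contra hall
      push_neg at hall
      rw [Finset.sum_eq_zero hall] at hπ1
      norm_num at hπ1
    obtain ⟨i₀, hi₀⟩ := hSne S₀ hS₀
    have := hzero S₀ hS₀ i₀ hi₀ hπS₀
    rw [hdot i₀, hx00] at this
    simp at this
    exact hx ((by rw [hxs, hx00, this, snoc_zero_zero]) : x = 0)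
  -- bound for each S
  have hbdd : BddAbove ((fun S => ((liftedM a θ₀ 𝒮 π)⁻¹ * liftedI a θ₀ S).trace) ''
      (𝒮 : Set (Finset (Fin N)))) := (𝒮.finite_toSet.image _).bddAbove
  have hkey : ∀ S ∈ 𝒮, ((designM a θ₀ 𝒮 π)⁻¹ * fisher a θ₀ S).trace
      ≤ (1 + εlift) * ((1 + ε) * d + ε) := by
    intro S hS
    have hp1 := sum_mnlP a θ₀ (hSne S hS)
    -- trace formulas
    have htrM : ((designM a θ₀ 𝒮 π)⁻¹ * fisher a θ₀ S).trace
        = ∑ i ∈ S, mnlP a θ₀ S i *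
          ((a i - abar a θ₀ S) ⬝ᵥ ((designM a θ₀ 𝒮 π)⁻¹ *ᵥ (a i - abar a θ₀ S))) := by
      rw [fisher, trace_mul_sum_smul_vecMulVec]
    have htrMt : ((liftedM a θ₀ 𝒮 π)⁻¹ * liftedI a θ₀ S).trace
        = ∑ i ∈ S, mnlP a θ₀ S i *
          (liftedFeat a i ⬝ᵥ ((liftedM a θ₀ 𝒮 π)⁻¹ *ᵥ liftedFeat a i)) := by
      rw [liftedI, trace_mul_sum_smul_vecMulVec]
    -- step 1: per-vector comparison with Mhat
    have hstep1 : ∀ u : Fin d → ℝ, u ⬝ᵥ ((designM a θ₀ 𝒮 π)⁻¹ *ᵥ u)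
        ≤ (1 + εlift) * (u ⬝ᵥ ((Mhat a θ₀ 𝒮 π)⁻¹ *ᵥ u)) := by
      intro u
      have key := quad_inv_mono hC hMh hCsub u
      rw [mySmul_inv hM.det_pos.ne'.isUnit hc.ne'] at key
      rw [smul_mulVec, dotProduct_smul, smul_eq_mul] at key
      have := mul_le_mul_of_nonneg_left key hc.le
      rwa [← mul_assoc, mul_inv_cancel₀ hc.ne', one_mul] at this
    -- step 3: lifted quadratic form identity
    have hstep3 : ∀ i ∈ S, (a i - bbar a θ₀ 𝒮 π) ⬝ᵥ
          ((Mhat a θ₀ 𝒮 π)⁻¹ *ᵥ (a i - bbar a θ₀ 𝒮 π))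
        = liftedFeat a i ⬝ᵥ ((liftedM a θ₀ 𝒮 π)⁻¹ *ᵥ liftedFeat a i) - 1 := by
      intro i _
      set z : Fin d → ℝ := (Mhat a θ₀ 𝒮 π)⁻¹ *ᵥ (a i - bbar a θ₀ 𝒮 π) with hz
      set c0 : ℝ := 1 - bbar a θ₀ 𝒮 π ⬝ᵥ z with hc0'
      have hMhz : Mhat a θ₀ 𝒮 π *ᵥ z = a i - bbar a θ₀ 𝒮 π := by
        rw [hz, mulVec_mulVec, Matrix.mul_nonsing_inv _ hMh.det_pos.ne'.isUnit, one_mulVec]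
      have hBz : Bbar a θ₀ 𝒮 π *ᵥ z
          = (a i - bbar a θ₀ 𝒮 π) + (bbar a θ₀ 𝒮 π ⬝ᵥ z) • bbar a θ₀ 𝒮 π := by
        have : Mhat a θ₀ 𝒮 π *ᵥ z
            = Bbar a θ₀ 𝒮 π *ᵥ z - (bbar a θ₀ 𝒮 π ⬝ᵥ z) • bbar a θ₀ 𝒮 π := by
          rw [Mhat, sub_mulVec, vecMulVec_mulVec']
        rw [← hMhz, this]
        abel
      have hMty : liftedM a θ₀ 𝒮 π *ᵥ (Fin.snoc z c0 : Fin (d+1) → ℝ) = liftedFeat a i := by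
        have hIS : ∀ T ∈ 𝒮, liftedI a θ₀ T *ᵥ (Fin.snoc z c0 : Fin (d+1) → ℝ)
            = Fin.snoc (Abar a θ₀ T *ᵥ z + c0 • abar a θ₀ T) (abar a θ₀ T ⬝ᵥ z + c0) := by
          intro T hT
          rw [liftedI, sum_mulVec']
          have hterm : ∀ j ∈ T, (mnlP a θ₀ T j • vecMulVec (liftedFeat a j) (liftedFeat a j))
                *ᵥ (Fin.snoc z c0 : Fin (d+1) → ℝ)
              = Fin.snoc ((mnlP a θ₀ T j * (a j ⬝ᵥ z + c0)) • a j)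
                  (mnlP a θ₀ T j * (a j ⬝ᵥ z + c0)) := by
            intro j _
            rw [smul_mulVec, vecMulVec_mulVec']
            rw [show liftedFeat a j ⬝ᵥ (Fin.snoc z c0 : Fin (d+1) → ℝ) = a j ⬝ᵥ z + c0 by
              rw [liftedFeat, snoc_dot_snoc, one_mul]]
            rw [liftedFeat, smul_smul, smul_snoc, mul_one]
          rw [Finset.sum_congr rfl hterm, sum_snoc]
          refine congrArg₂ (fun (u : Fin d → ℝ) (r : ℝ) => (Fin.snoc u r : Fin (d+1) → ℝ)) ?_ ?_
          · -- top component
            have hsplit : ∀ j ∈ T, (mnlP a θ₀ T j * (a j ⬝ᵥ z + c0)) • a j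
                = (mnlP a θ₀ T j • vecMulVec (a j) (a j)) *ᵥ z + c0 • mnlP a θ₀ T j • a j := by
              intro j _
              rw [smul_mulVec, vecMulVec_mulVec', smul_smul, smul_smul, ← add_smul]
              congr 1
              ring
            rw [Finset.sum_congr rfl hsplit, Finset.sum_add_distrib, Abar, sum_mulVec', abar,
              Finset.smul_sum]
          · -- bottom component
            have hsplit : ∀ j ∈ T, mnlP a θ₀ T j * (a j ⬝ᵥ z + c0)
                = mnlP a θ₀ T j * (a j ⬝ᵥ z) + mnlP a θ₀ T j * c0 := fun j _ => by ring
            rw [Finset.sum_congr rfl hsplit, Finset.sum_add_distrib, ← abar_dot,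
              ← Finset.sum_mul, sum_mnlP a θ₀ (hSne T hT), one_mul]
        rw [liftedM, sum_mulVec']
        rw [Finset.sum_congr rfl fun T hT => by
          rw [smul_mulVec, hIS T hT, smul_snoc]]
        rw [sum_snoc]
        have htop : ∑ T ∈ 𝒮, π T • (Abar a θ₀ T *ᵥ z + c0 • abar a θ₀ T)
            = Bbar a θ₀ 𝒮 π *ᵥ z + c0 • bbar a θ₀ 𝒮 π := by
          rw [Bbar, sum_mulVec', bbar, Finset.smul_sum, ← Finset.sum_add_distrib]
          refine Finset.sum_congr rfl fun T _ => ?_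
          rw [smul_add, smul_mulVec, smul_comm c0 (π T)]
        have hbot : ∑ T ∈ 𝒮, π T * (abar a θ₀ T ⬝ᵥ z + c0) = bbar a θ₀ 𝒮 π ⬝ᵥ z + c0 := by
          have hsplit : ∀ T ∈ 𝒮, π T * (abar a θ₀ T ⬝ᵥ z + c0)
              = π T * (abar a θ₀ T ⬝ᵥ z) + π T * c0 := fun T _ => by ring
          rw [Finset.sum_congr rfl hsplit, Finset.sum_add_distrib, ← bbar_dot,
            ← Finset.sum_mul, hπ1, one_mul]
        rw [htop, hbot, hBz, hc0', liftedFeat]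
        refine congrArg₂ (fun (u : Fin d → ℝ) (r : ℝ) => (Fin.snoc u r : Fin (d+1) → ℝ)) ?_ ?_
        · module
        · ring
      have hyinv : (liftedM a θ₀ 𝒮 π)⁻¹ *ᵥ liftedFeat a i = Fin.snoc z c0 := by
        rw [← hMty, mulVec_mulVec, Matrix.nonsing_inv_mul _ hMt.det_pos.ne'.isUnit, one_mulVec]
      rw [hyinv, liftedFeat, snoc_dot_snoc, hc0', sub_dotProduct]
      ring
    -- step 2: recentring inequality
    have hAherm : ((Mhat a θ₀ 𝒮 π)⁻¹).IsHermitian := hMh.inv.isHermitian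
    have hstep2 : ∑ i ∈ S, mnlP a θ₀ S i *
          ((a i - abar a θ₀ S) ⬝ᵥ ((Mhat a θ₀ 𝒮 π)⁻¹ *ᵥ (a i - abar a θ₀ S)))
        ≤ ∑ i ∈ S, mnlP a θ₀ S i *
          ((a i - bbar a θ₀ 𝒮 π) ⬝ᵥ ((Mhat a θ₀ 𝒮 π)⁻¹ *ᵥ (a i - bbar a θ₀ 𝒮 π))) := by
      set A := (Mhat a θ₀ 𝒮 π)⁻¹ with hA
      set w : Fin d → ℝ := abar a θ₀ S - bbar a θ₀ 𝒮 π with hw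
      have hvu : ∀ i : Fin N, a i - bbar a θ₀ 𝒮 π = (a i - abar a θ₀ S) + w := by
        intro i; rw [hw]; abel
      have hexp : ∀ i ∈ S, mnlP a θ₀ S i * ((a i - bbar a θ₀ 𝒮 π) ⬝ᵥ (A *ᵥ (a i - bbar a θ₀ 𝒮 π)))
          = mnlP a θ₀ S i * ((a i - abar a θ₀ S) ⬝ᵥ (A *ᵥ (a i - abar a θ₀ S)))
            + 2 * (mnlP a θ₀ S i * ((a i - abar a θ₀ S) ⬝ᵥ (A *ᵥ w)))
            + mnlP a θ₀ S i * (w ⬝ᵥ (A *ᵥ w)) := by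
        intro i _
        rw [hvu i, mulVec_add, dotProduct_add, add_dotProduct, add_dotProduct,
          dot_mulVec_symm' hAherm w (a i - abar a θ₀ S)]
        ring
      have hcross : ∑ i ∈ S, mnlP a θ₀ S i * ((a i - abar a θ₀ S) ⬝ᵥ (A *ᵥ w)) = 0 := by
        have hsplit : ∀ i ∈ S, mnlP a θ₀ S i * ((a i - abar a θ₀ S) ⬝ᵥ (A *ᵥ w))
            = mnlP a θ₀ S i * (a i ⬝ᵥ (A *ᵥ w)) - mnlP a θ₀ S i * (abar a θ₀ S ⬝ᵥ (A *ᵥ w)) :=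
          fun i _ => by rw [sub_dotProduct]; ring
        rw [Finset.sum_congr rfl hsplit, Finset.sum_sub_distrib, ← abar_dot,
          ← Finset.sum_mul, hp1, one_mul, sub_self]
      have hwAw : 0 ≤ w ⬝ᵥ (A *ᵥ w) := by
        have := hMh.inv.posSemidef.dotProduct_mulVec_nonneg w
        simpa using this
      rw [Finset.sum_congr rfl hexp, Finset.sum_add_distrib, Finset.sum_add_distrib,
        ← Finset.mul_sum, hcross, ← Finset.sum_mul, hp1, mul_zero, one_mul]
      linarith
    -- assemble
    have htr_le : ((liftedM a θ₀ 𝒮 π)⁻¹ * liftedI a θ₀ S).trace ≤ (1 + ε) * (d + 1) :=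
      le_trans (le_csSup hbdd ⟨S, hS, rfl⟩) hg
    have hsum3 : ∑ i ∈ S, mnlP a θ₀ S i *
          ((a i - bbar a θ₀ 𝒮 π) ⬝ᵥ ((Mhat a θ₀ 𝒮 π)⁻¹ *ᵥ (a i - bbar a θ₀ 𝒮 π)))
        = ((liftedM a θ₀ 𝒮 π)⁻¹ * liftedI a θ₀ S).trace - 1 := by
      rw [htrMt]
      rw [Finset.sum_congr rfl fun i hi => by rw [hstep3 i hi]]
      have hsplit : ∀ i ∈ S, mnlP a θ₀ S i *
            (liftedFeat a i ⬝ᵥ ((liftedM a θ₀ 𝒮 π)⁻¹ *ᵥ liftedFeat a i) - 1)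
          = mnlP a θ₀ S i * (liftedFeat a i ⬝ᵥ ((liftedM a θ₀ 𝒮 π)⁻¹ *ᵥ liftedFeat a i))
            - mnlP a θ₀ S i := fun i _ => by ring
      rw [Finset.sum_congr rfl hsplit, Finset.sum_sub_distrib, hp1]
    have hmono : ∑ i ∈ S, mnlP a θ₀ S i *
          ((a i - abar a θ₀ S) ⬝ᵥ ((designM a θ₀ 𝒮 π)⁻¹ *ᵥ (a i - abar a θ₀ S)))
        ≤ (1 + εlift) * ∑ i ∈ S, mnlP a θ₀ S i *
          ((a i - abar a θ₀ S) ⬝ᵥ ((Mhat a θ₀ 𝒮 π)⁻¹ *ᵥ (a i - abar a θ₀ S))) := by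
      rw [Finset.mul_sum]
      refine Finset.sum_le_sum fun i hi => ?_
      have := hstep1 (a i - abar a θ₀ S)
      have hpnn := (mnlP_pos a θ₀ (hSne S hS) i).le
      calc mnlP a θ₀ S i * ((a i - abar a θ₀ S) ⬝ᵥ ((designM a θ₀ 𝒮 π)⁻¹ *ᵥ (a i - abar a θ₀ S)))
          ≤ mnlP a θ₀ S i * ((1 + εlift) *
            ((a i - abar a θ₀ S) ⬝ᵥ ((Mhat a θ₀ 𝒮 π)⁻¹ *ᵥ (a i - abar a θ₀ S)))) :=
            mul_le_mul_of_nonneg_left this hpnn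
        _ = (1 + εlift) * (mnlP a θ₀ S i *
            ((a i - abar a θ₀ S) ⬝ᵥ ((Mhat a θ₀ 𝒮 π)⁻¹ *ᵥ (a i - abar a θ₀ S)))) := by ring
    calc ((designM a θ₀ 𝒮 π)⁻¹ * fisher a θ₀ S).trace
        = ∑ i ∈ S, mnlP a θ₀ S i *
          ((a i - abar a θ₀ S) ⬝ᵥ ((designM a θ₀ 𝒮 π)⁻¹ *ᵥ (a i - abar a θ₀ S))) := htrM
      _ ≤ (1 + εlift) * ∑ i ∈ S, mnlP a θ₀ S i *
          ((a i - abar a θ₀ S) ⬝ᵥ ((Mhat a θ₀ 𝒮 π)⁻¹ *ᵥ (a i - abar a θ₀ S))) := hmono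
      _ ≤ (1 + εlift) * ∑ i ∈ S, mnlP a θ₀ S i *
          ((a i - bbar a θ₀ 𝒮 π) ⬝ᵥ ((Mhat a θ₀ 𝒮 π)⁻¹ *ᵥ (a i - bbar a θ₀ 𝒮 π))) :=
            mul_le_mul_of_nonneg_left hstep2 hc.le
      _ = (1 + εlift) * (((liftedM a θ₀ 𝒮 π)⁻¹ * liftedI a θ₀ S).trace - 1) := by rw [hsum3]
      _ ≤ (1 + εlift) * ((1 + ε) * (d + 1) - 1) := by
          apply mul_le_mul_of_nonneg_left _ hc.le
          linarith
      _ = (1 + εlift) * ((1 + ε) * d + ε) := by ring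
  constructor
  · rw [gObj]
    apply Real.sSup_le
    · rintro t ⟨S, hS, rfl⟩
      exact hkey S hS
    · have h1 : 0 ≤ (1 + ε) * d + ε := by nlinarith
      nlinarith
  · nlinarith [mul_nonneg (mul_nonneg (by linarith : (0:ℝ) ≤ 1 + εlift) hε) hd0,
      mul_nonneg hεlift hε]

end
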